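/- Let n ≥ 2, let f : 2^{[n]} → ℝ be a submodular set function with f(∅) = 0 that is non-decreasing (f(S) ≤ f(T) whenever S ⊆ T), and let α : 𝓕 → ℚ₊ be a fractional covering with respect to a family 𝓕 of subsets of [n] satisfying the standing assumptions. Then ∑_{S ∈ 𝓕} α(S) f(S) = f([n]) if and only if f is modular and f(Z) = 0 for every Z ⊆ {i ∈ [n] : ∑_{S ∈ 𝓕 : i ∈ S} α(S) > 1}. -/
import Mathlib


open Finset
open scoped Classical BigOperators

theorem stmt_4 (n : ℕ) (hn : 2 ≤ n) (f : Finset (Fin n) → ℝ)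
    (hf0 : f ∅ = 0)
    (hsubmod : ∀ A B : Finset (Fin n), f (A ∪ B) + f (A ∩ B) ≤ f A + f B)
    (hmono : ∀ A B : Finset (Fin n), A ⊆ B → f A ≤ f B)
    (ι : Type) [Fintype ι] (S : ι → Finset (Fin n)) (α : ι → ℚ)
    (hproper : ∀ k, S k ≠ Finset.univ)
    (hpos : ∀ k, 0 < α k)
    (hsep : ∀ i j : Fin n, i ≠ j → ¬ (∀ k, i ∈ S k ↔ j ∈ S k))
    (hcov : ∀ i : Fin n, 1 ≤ ∑ k ∈ Finset.univ.filter (fun k => i ∈ S k), α k) :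
    (∑ k : ι, (α k : ℝ) * f (S k)) = f Finset.univ ↔
      ((∀ A : Finset (Fin n), f A = ∑ i ∈ A, f {i}) ∧
        ∀ Z ⊆ Finset.univ.filter
            (fun i : Fin n => 1 < ∑ k ∈ Finset.univ.filter (fun k => i ∈ S k), α k),
          f Z = 0) := by
  have hposR : ∀ k, (0:ℝ) < (α k : ℝ) := fun k => by exact_mod_cast hpos k
  have hcovR : ∀ i : Fin n,
      (1:ℝ) ≤ ∑ k ∈ Finset.univ.filter (fun k => i ∈ S k), (α k : ℝ) := by
    intro i; exact_mod_cast hcov i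
  -- nonnegativity of marginals
  have hm0 : ∀ (j : Fin n) (T : Finset (Fin n)), 0 ≤ f (insert j T) - f T := by
    intro j T
    have := hmono T (insert j T) (Finset.subset_insert _ _)
    linarith
  -- marginals are decreasing
  have hmarg : ∀ (j : Fin n) (X Y : Finset (Fin n)), X ⊆ Y → j ∉ Y →
      f (insert j Y) - f Y ≤ f (insert j X) - f X := by
    intro j X Y hXY hjY
    have h := hsubmod (insert j X) Y
    have h1 : insert j X ∪ Y = insert j Y := by
      rw [Finset.insert_union, Finset.union_eq_right.mpr hXY]
    have h2 : insert j X ∩ Y = X := by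
      rw [Finset.insert_inter_of_notMem hjY, Finset.inter_eq_left.mpr hXY]
    rw [h1, h2] at h
    linarith
  -- the per-step inequality, with slack term for a chosen k₀
  have hstep : ∀ (j : Fin n) (T : Finset (Fin n)), j ∉ T → ∀ k₀, j ∈ S k₀ →
      f (insert j T) - f T
        + (α k₀ : ℝ) * ((f (insert j (S k₀ ∩ T)) - f (S k₀ ∩ T)) - (f (insert j T) - f T))
        ≤ ∑ k, (α k : ℝ) * (f (S k ∩ insert j T) - f (S k ∩ T)) := by
    intro j T hjT k₀ hk₀
    have hk₀F : k₀ ∈ Finset.univ.filter (fun k => j ∈ S k) := by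
      simp [hk₀]
    have hzero : ∀ k ∈ Finset.univ.filter (fun k => ¬ j ∈ S k),
        (α k : ℝ) * (f (S k ∩ insert j T) - f (S k ∩ T)) = 0 := by
      intro k hk
      simp only [Finset.mem_filter] at hk
      have : S k ∩ insert j T = S k ∩ T := by
        rw [Finset.inter_comm, Finset.insert_inter_of_notMem hk.2, Finset.inter_comm]
      rw [this]; ring
    have hsplit : ∑ k, (α k : ℝ) * (f (S k ∩ insert j T) - f (S k ∩ T))
        = ∑ k ∈ Finset.univ.filter (fun k => j ∈ S k),
            (α k : ℝ) * (f (insert j (S k ∩ T)) - f (S k ∩ T)) := by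
      rw [← Finset.sum_filter_add_sum_filter_not Finset.univ (fun k => j ∈ S k),
        Finset.sum_eq_zero hzero, add_zero]
      refine Finset.sum_congr rfl fun k hk => ?_
      simp only [Finset.mem_filter] at hk
      rw [Finset.inter_comm (S k), Finset.insert_inter_of_mem hk.2, Finset.inter_comm T]
    rw [hsplit]
    have hb : ∀ k ∈ (Finset.univ.filter (fun k => j ∈ S k)).erase k₀,
        (α k : ℝ) * (f (insert j T) - f T)
          ≤ (α k : ℝ) * (f (insert j (S k ∩ T)) - f (S k ∩ T)) := by
      intro k _
      exact mul_le_mul_of_nonneg_left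
        (hmarg j (S k ∩ T) T Finset.inter_subset_right hjT) (hposR k).le
    have hsum : ∑ k ∈ (Finset.univ.filter (fun k => j ∈ S k)).erase k₀,
        (α k : ℝ) * (f (insert j T) - f T)
        ≤ ∑ k ∈ (Finset.univ.filter (fun k => j ∈ S k)).erase k₀,
        (α k : ℝ) * (f (insert j (S k ∩ T)) - f (S k ∩ T)) := Finset.sum_le_sum hb
    have hdecomp : ∑ k ∈ Finset.univ.filter (fun k => j ∈ S k),
        (α k : ℝ) * (f (insert j (S k ∩ T)) - f (S k ∩ T))
        = (α k₀ : ℝ) * (f (insert j (S k₀ ∩ T)) - f (S k₀ ∩ T))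
          + ∑ k ∈ (Finset.univ.filter (fun k => j ∈ S k)).erase k₀,
              (α k : ℝ) * (f (insert j (S k ∩ T)) - f (S k ∩ T)) :=
      (Finset.add_sum_erase _ _ hk₀F).symm
    have hc : ∑ k ∈ (Finset.univ.filter (fun k => j ∈ S k)).erase k₀,
        (α k : ℝ) * (f (insert j T) - f T)
        = ((∑ k ∈ Finset.univ.filter (fun k => j ∈ S k), (α k : ℝ)) - (α k₀ : ℝ))
            * (f (insert j T) - f T) := by
      rw [← Finset.sum_mul, Finset.sum_erase_eq_sub hk₀F]
    have hcv := hcovR j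
    have hnn := hm0 j T
    nlinarith [hsum, hdecomp, hc,
      mul_nonneg (sub_nonneg.mpr hcv) hnn]
  -- per-step inequality without slack
  have hstep0 : ∀ (j : Fin n) (T : Finset (Fin n)), j ∉ T →
      f (insert j T) - f T ≤ ∑ k, (α k : ℝ) * (f (S k ∩ insert j T) - f (S k ∩ T)) := by
    intro j T hjT
    obtain ⟨k₀, hk₀⟩ : ∃ k₀, j ∈ S k₀ := by
      by_contra h
      push_neg at h
      have := hcov j
      rw [Finset.filter_false_of_mem (fun k _ => h k), Finset.sum_empty] at this
      exact absurd this (by norm_num)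
    have h := hstep j T hjT k₀ hk₀
    have hge := hmarg j (S k₀ ∩ T) T Finset.inter_subset_right hjT
    nlinarith [hposR k₀]
  -- Φ is monotone
  have hΦmono : ∀ (D T : Finset (Fin n)), Disjoint D T →
      (∑ k, (α k : ℝ) * f (S k ∩ T)) - f T
        ≤ (∑ k, (α k : ℝ) * f (S k ∩ (T ∪ D))) - f (T ∪ D) := by
    intro D
    induction D using Finset.induction_on with
    | empty => intro T _; simp
    | @insert j D' hjD' ih =>
      intro T hdisj
      rw [Finset.disjoint_insert_left] at hdisj
      have hjT : j ∉ T := hdisj.1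
      have h1 : T ∪ insert j D' = insert j T ∪ D' := by
        rw [Finset.union_insert, Finset.insert_union]
      have h2 := ih (insert j T) (by
        rw [Finset.disjoint_insert_right]
        exact ⟨hjD', hdisj.2⟩)
      have h3 := hstep0 j T hjT
      have h4 : ∑ k, (α k : ℝ) * (f (S k ∩ insert j T) - f (S k ∩ T))
          = (∑ k, (α k : ℝ) * f (S k ∩ insert j T)) - ∑ k, (α k : ℝ) * f (S k ∩ T) := by
        rw [← Finset.sum_sub_distrib]
        exact Finset.sum_congr rfl fun k _ => by ring
      rw [h1]
      rw [h4] at h3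
      linarith
  constructor
  · intro heq
    -- Φ vanishes everywhere
    have hΦ0 : ∀ T : Finset (Fin n), (∑ k, (α k : ℝ) * f (S k ∩ T)) = f T := by
      intro T
      have h1 := hΦmono T ∅ (Finset.disjoint_empty_right T)
      have h2 := hΦmono (Finset.univ \ T) T (Finset.sdiff_disjoint)
      rw [Finset.empty_union] at h1
      rw [Finset.union_sdiff_of_subset (Finset.subset_univ T)] at h2
      simp only [Finset.inter_empty, hf0, mul_zero, Finset.sum_const_zero, sub_zero,
        Finset.inter_univ] at h1 h2
      rw [heq] at h2
      linarith
    -- all slacks vanish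
    have hslack : ∀ (j : Fin n) (T : Finset (Fin n)), j ∉ T → ∀ k₀, j ∈ S k₀ →
        f (insert j (S k₀ ∩ T)) - f (S k₀ ∩ T) = f (insert j T) - f T := by
      intro j T hjT k₀ hjk₀
      have h := hstep j T hjT k₀ hjk₀
      have hR : ∑ k, (α k : ℝ) * (f (S k ∩ insert j T) - f (S k ∩ T))
          = f (insert j T) - f T := by
        have h4 : ∑ k, (α k : ℝ) * (f (S k ∩ insert j T) - f (S k ∩ T))
            = (∑ k, (α k : ℝ) * f (S k ∩ insert j T)) - ∑ k, (α k : ℝ) * f (S k ∩ T) := by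
          rw [← Finset.sum_sub_distrib]
          exact Finset.sum_congr rfl fun k _ => by ring
        rw [h4, hΦ0 (insert j T), hΦ0 T]
      rw [hR] at h
      have hge := hmarg j (S k₀ ∩ T) T Finset.inter_subset_right hjT
      have hle : f (insert j (S k₀ ∩ T)) - f (S k₀ ∩ T) - (f (insert j T) - f T) ≤ 0 := by
        nlinarith [hposR k₀]
      linarith
    -- pairwise modularity relation
    have hD1 : ∀ (j i : Fin n) (k₀ : ι), j ∈ S k₀ → i ∉ S k₀ → i ≠ j →
        ∀ X : Finset (Fin n), i ∉ X → j ∉ X →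
        f (insert j (insert i X)) - f (insert i X) = f (insert j X) - f X := by
      intro j i k₀ hjk hik hij X hiX hjX
      have hjiX : j ∉ insert i X := by
        simp only [Finset.mem_insert]
        rintro (rfl | h)
        · exact hij rfl
        · exact hjX h
      have e1 := hslack j (insert i X) hjiX k₀ hjk
      have e2 := hslack j X hjX k₀ hjk
      have hint : S k₀ ∩ insert i X = S k₀ ∩ X := by
        rw [Finset.inter_comm, Finset.insert_inter_of_notMem hik, Finset.inter_comm]
      rw [hint] at e1
      linarith
    have hD : ∀ (i j : Fin n), i ≠ j → ∀ X : Finset (Fin n), i ∉ X → j ∉ X →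
        f (insert j (insert i X)) - f (insert i X) = f (insert j X) - f X := by
      intro i j hij X hiX hjX
      have hs := hsep i j hij
      push_neg at hs
      obtain ⟨k₀, hk₀⟩ := hs
      rcases hk₀ with ⟨hi, hj⟩ | ⟨hi, hj⟩
      · have h := hD1 i j k₀ hi hj (Ne.symm hij) X hjX hiX
        rw [Finset.insert_comm] at h
        linarith
      · exact hD1 j i k₀ hj hi hij X hiX hjX
    -- marginals are constant
    have hmc : ∀ (j : Fin n) (X : Finset (Fin n)), j ∉ X → f (insert j X) - f X = f {j} := by
      intro j X
      induction X using Finset.induction_on with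
      | empty => intro _; simp [hf0]
      | @insert i X' hiX' ih =>
        intro hjX
        have hij : i ≠ j := fun h => hjX (h ▸ Finset.mem_insert_self i X')
        have hjX' : j ∉ X' := fun h => hjX (Finset.mem_insert_of_mem h)
        have h := hD i j hij X' hiX' hjX'
        rw [h]
        exact ih hjX'
    -- modularity
    have hmod : ∀ A : Finset (Fin n), f A = ∑ i ∈ A, f {i} := by
      intro A
      induction A using Finset.induction_on with
      | empty => simp [hf0]
      | @insert i A' hiA' ih =>
        rw [Finset.sum_insert hiA', ← ih]
        have := hmc i A' hiA'
        linarith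
    refine ⟨hmod, ?_⟩
    -- exchange sums
    have key : ∑ k, (α k : ℝ) * f (S k)
        = ∑ i : Fin n, (∑ k ∈ Finset.univ.filter (fun k => i ∈ S k), (α k : ℝ)) * f {i} := by
      calc ∑ k, (α k : ℝ) * f (S k)
          = ∑ k, ∑ i : Fin n, (if i ∈ S k then (α k : ℝ) * f {i} else 0) := by
            refine Finset.sum_congr rfl fun k _ => ?_
            rw [hmod (S k), Finset.mul_sum]
            rw [← Finset.sum_filter]
            congr 1
            ext x
            simp
        _ = ∑ i : Fin n, ∑ k, (if i ∈ S k then (α k : ℝ) * f {i} else 0) :=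
            Finset.sum_comm
        _ = ∑ i : Fin n, (∑ k ∈ Finset.univ.filter (fun k => i ∈ S k), (α k : ℝ)) * f {i} := by
            refine Finset.sum_congr rfl fun i _ => ?_
            rw [Finset.sum_mul, ← Finset.sum_filter]
    have huniv : f Finset.univ = ∑ i : Fin n, f {i} := by
      simpa using hmod Finset.univ
    have hzsum : ∑ i : Fin n,
        ((∑ k ∈ Finset.univ.filter (fun k => i ∈ S k), (α k : ℝ)) - 1) * f {i} = 0 := by
      have : ∑ i : Fin n,
          ((∑ k ∈ Finset.univ.filter (fun k => i ∈ S k), (α k : ℝ)) - 1) * f {i}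
          = (∑ i : Fin n, (∑ k ∈ Finset.univ.filter (fun k => i ∈ S k), (α k : ℝ)) * f {i})
            - ∑ i : Fin n, f {i} := by
        rw [← Finset.sum_sub_distrib]
        exact Finset.sum_congr rfl fun i _ => by ring
      rw [this, ← key, heq, huniv, sub_self]
    have hterm : ∀ i : Fin n,
        ((∑ k ∈ Finset.univ.filter (fun k => i ∈ S k), (α k : ℝ)) - 1) * f {i} = 0 := by
      have hnn : ∀ i ∈ (Finset.univ : Finset (Fin n)),
          0 ≤ ((∑ k ∈ Finset.univ.filter (fun k => i ∈ S k), (α k : ℝ)) - 1) * f {i} := by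
        intro i _
        refine mul_nonneg (sub_nonneg.mpr (hcovR i)) ?_
        have := hmono ∅ {i} (Finset.empty_subset _)
        linarith
      intro i
      exact (Finset.sum_eq_zero_iff_of_nonneg hnn).mp hzsum i (Finset.mem_univ i)
    intro Z hZ
    rw [hmod Z]
    refine Finset.sum_eq_zero fun i hiZ => ?_
    have hiF := hZ hiZ
    simp only [Finset.mem_filter, Finset.mem_univ, true_and] at hiF
    have hiFR : (1:ℝ) < ∑ k ∈ Finset.univ.filter (fun k => i ∈ S k), (α k : ℝ) := by
      exact_mod_cast hiF
    have h := hterm i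
    rcases mul_eq_zero.mp h with h' | h'
    · linarith
    · exact h'
  · rintro ⟨hmod, hzero⟩
    have key : ∑ k, (α k : ℝ) * f (S k)
        = ∑ i : Fin n, (∑ k ∈ Finset.univ.filter (fun k => i ∈ S k), (α k : ℝ)) * f {i} := by
      calc ∑ k, (α k : ℝ) * f (S k)
          = ∑ k, ∑ i : Fin n, (if i ∈ S k then (α k : ℝ) * f {i} else 0) := by
            refine Finset.sum_congr rfl fun k _ => ?_
            rw [hmod (S k), Finset.mul_sum]
            rw [← Finset.sum_filter]
            congr 1
            ext x
            simp
        _ = ∑ i : Fin n, ∑ k, (if i ∈ S k then (α k : ℝ) * f {i} else 0) :=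
            Finset.sum_comm
        _ = ∑ i : Fin n, (∑ k ∈ Finset.univ.filter (fun k => i ∈ S k), (α k : ℝ)) * f {i} := by
            refine Finset.sum_congr rfl fun i _ => ?_
            rw [Finset.sum_mul, ← Finset.sum_filter]
    have huniv : f Finset.univ = ∑ i : Fin n, f {i} := by
      simpa using hmod Finset.univ
    rw [key, huniv]
    refine Finset.sum_congr rfl fun i _ => ?_
    rcases eq_or_lt_of_le (hcov i) with h | h
    · rw [show (∑ k ∈ Finset.univ.filter (fun k => i ∈ S k), (α k : ℝ)) = 1 by
        exact_mod_cast h.symm]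
      ring
    · have hi0 : f {i} = 0 := by
        apply hzero {i}
        rw [Finset.singleton_subset_iff, Finset.mem_filter]
        exact ⟨Finset.mem_univ i, h⟩
      rw [hi0]
      ring
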